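/- For any probability distributions μ and ν on ℝ^d with finite second moments, and any z ∈ ℝ^d, ‖E_{X∼μ}[(X−z)(X−z)ᵀ] − E_{Y∼ν}[(Y−z)(Y−z)ᵀ]‖ ≤ (sqrt(∫|x−z|² dμ) + sqrt(∫|y−z|² dν)) · W₂(μ, ν). -/

import Mathlib

set_option maxHeartbeats 1000000


open MeasureTheory Real

/-- The operator (spectral) norm of a square matrix. -/
noncomputable def opNorm {k : ℕ} (A : Matrix (Fin k) (Fin k) ℝ) : ℝ :=
  ‖LinearMap.toContinuousLinearMap (Matrix.toEuclideanLin A)‖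

/-- The 2-Wasserstein distance between two probability measures on `ℝ^d`,
defined as the infimum of quadratic transport costs over couplings. -/
noncomputable def W2 {d : ℕ} (μ ν : Measure (EuclideanSpace ℝ (Fin d))) : ℝ :=
  sInf {r : ℝ | ∃ γ : Measure (EuclideanSpace ℝ (Fin d) × EuclideanSpace ℝ (Fin d)),
    IsProbabilityMeasure γ ∧ γ.map Prod.fst = μ ∧ γ.map Prod.snd = ν ∧
    r = Real.sqrt (∫ p, ‖p.1 - p.2‖ ^ 2 ∂γ)}

/-- The second-moment matrix `E[(X - z)(X - z)ᵀ]` of a distribution about a point `z`. -/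
noncomputable def secondMomentAbout {d : ℕ} (μ : Measure (EuclideanSpace ℝ (Fin d)))
    (z : EuclideanSpace ℝ (Fin d)) : Matrix (Fin d) (Fin d) ℝ :=
  fun i j => ∫ x, (x i - z i) * (x j - z j) ∂μ

open scoped RealInnerProductSpace

section helpers
variable {α : Type*} [MeasurableSpace α] {γ : Measure α}

lemma aux_integrable_mul_of_sq {f g : α → ℝ}
    (hfm : AEStronglyMeasurable f γ) (hgm : AEStronglyMeasurable g γ)
    (hf : Integrable (fun x => f x ^ 2) γ) (hg : Integrable (fun x => g x ^ 2) γ) :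
    Integrable (fun x => f x * g x) γ := by
  refine Integrable.mono' ((hf.add hg).div_const 2) (hfm.mul hgm) ?_
  filter_upwards with x
  simp only [Pi.add_apply]
  rw [Real.norm_eq_abs, abs_mul]
  nlinarith [sq_nonneg (|f x| - |g x|), sq_abs (f x), sq_abs (g x), abs_nonneg (f x),
    abs_nonneg (g x)]

lemma aux_abs_integral_mul_le {f g : α → ℝ}
    (hfm : AEStronglyMeasurable f γ) (hgm : AEStronglyMeasurable g γ)
    (hf : Integrable (fun x => f x ^ 2) γ) (hg : Integrable (fun x => g x ^ 2) γ) :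
    |∫ x, f x * g x ∂γ| ≤ Real.sqrt (∫ x, f x ^ 2 ∂γ) * Real.sqrt (∫ x, g x ^ 2 ∂γ) := by
  have h2 : (ENNReal.ofReal (2:ℝ)) = 2 := by norm_num
  have hf2 : MemLp f (ENNReal.ofReal 2) γ := by
    rw [h2]; exact (memLp_two_iff_integrable_sq hfm).2 hf
  have hg2 : MemLp g (ENNReal.ofReal 2) γ := by
    rw [h2]; exact (memLp_two_iff_integrable_sq hgm).2 hg
  have hpq : Real.HolderConjugate 2 2 := by rw [Real.holderConjugate_iff]; norm_num
  have key := integral_mul_norm_le_Lp_mul_Lq hpq hf2 hg2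
  have hnorm : ∀ (h : α → ℝ), (fun x => ‖h x‖ ^ (2:ℝ)) = fun x => h x ^ 2 := by
    intro h; funext x
    rw [show (2:ℝ) = ((2:ℕ):ℝ) by norm_num, Real.rpow_natCast, Real.norm_eq_abs, sq_abs]
  rw [hnorm f, hnorm g] at key
  calc |∫ x, f x * g x ∂γ| ≤ ∫ x, ‖f x‖ * ‖g x‖ ∂γ := by
        rw [← Real.norm_eq_abs]
        refine (norm_integral_le_integral_norm (fun x => f x * g x)).trans_eq ?_
        simp [abs_mul]
    _ ≤ (∫ x, f x ^ 2 ∂γ) ^ (1/(2:ℝ)) * (∫ x, g x ^ 2 ∂γ) ^ (1/(2:ℝ)) := key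
    _ = _ := by rw [← Real.sqrt_eq_rpow, ← Real.sqrt_eq_rpow]

lemma aux_map_integral_eq {β : Type*} [MeasurableSpace β]
    {μ : Measure β} {T : α → β} (hT : Measurable T) (h : γ.map T = μ)
    {f : β → ℝ} (hf : AEStronglyMeasurable f μ) : ∫ x, f x ∂μ = ∫ p, f (T p) ∂γ := by
  subst h; exact integral_map hT.aemeasurable hf

lemma aux_map_integrable {β : Type*} [MeasurableSpace β]
    {μ : Measure β} {T : α → β} (hT : Measurable T) (h : γ.map T = μ)
    {f : β → ℝ} (hf : AEStronglyMeasurable f μ) (hint : Integrable f μ) :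
    Integrable (fun p => f (T p)) γ := by
  subst h; exact (integrable_map_measure hf hT.aemeasurable).1 hint

end helpers

section euclid
variable {d : ℕ}
local notation "E" => EuclideanSpace ℝ (Fin d)

lemma aux_coord_sq_le (w : E) (i : Fin d) : (w i) ^ 2 ≤ ‖w‖ ^ 2 := by
  have h : ‖w‖ ^ 2 = ∑ j, (w j) ^ 2 := by
    rw [EuclideanSpace.norm_eq, Real.sq_sqrt (by positivity)]
    simp [sq_abs]
  rw [h]
  exact Finset.single_le_sum (f := fun j => (w j)^2) (fun j _ => sq_nonneg _) (Finset.mem_univ i)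

lemma aux_inner_sq_le (u w : E) : ⟪u, w⟫ ^ 2 ≤ ‖u‖ ^ 2 * ‖w‖ ^ 2 := by
  have h := abs_real_inner_le_norm u w
  nlinarith [abs_nonneg ⟪u, w⟫, sq_abs ⟪u, w⟫, norm_nonneg u, norm_nonneg w]

lemma aux_inner_expand (u v z : E) (w : E) :
    ⟪u, w - z⟫ * ⟪v, w - z⟫ = ∑ i, ∑ j, u i * v j * ((w i - z i) * (w j - z j)) := by
  simp only [PiLp.inner_apply, RCLike.inner_apply, conj_trivial, PiLp.sub_apply]
  rw [Finset.sum_mul_sum]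
  refine Finset.sum_congr rfl fun i _ => Finset.sum_congr rfl fun j _ => by ring

lemma aux_inner_mulVec (u v : E) (M : Matrix (Fin d) (Fin d) ℝ) :
    ⟪u, (LinearMap.toContinuousLinearMap (Matrix.toEuclideanLin M)) v⟫
      = ∑ i, ∑ j, u i * v j * M i j := by
  simp only [LinearMap.coe_toContinuousLinearMap', Matrix.toEuclideanLin_apply,
    PiLp.inner_apply, RCLike.inner_apply, conj_trivial]
  refine Finset.sum_congr rfl fun i _ => ?_
  simp only [Matrix.mulVec, dotProduct,
    Finset.mul_sum, Finset.sum_mul]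
  exact Finset.sum_congr rfl fun j _ => by ring

lemma aux_proj_cont (i : Fin d) : Continuous (fun x : E => x i) :=
  (EuclideanSpace.proj (𝕜 := ℝ) i).continuous

lemma aux_int_shift (μ : Measure E) [IsFiniteMeasure μ] (z : E)
    (h : Integrable (fun x => ‖x‖ ^ 2) μ) : Integrable (fun x => ‖x - z‖ ^ 2) μ := by
  refine Integrable.mono' ((h.const_mul 2).add (integrable_const (2 * ‖z‖ ^ 2)))
    (((continuous_id.sub continuous_const).norm.pow 2).aestronglyMeasurable) ?_
  filter_upwards with x
  have h1 : ‖x - z‖ ≤ ‖x‖ + ‖z‖ := norm_sub_le _ _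
  simp only [Pi.add_apply]
  rw [Real.norm_eq_abs, abs_of_nonneg (by positivity)]
  nlinarith [sq_nonneg (‖x‖ - ‖z‖), mul_self_le_mul_self (norm_nonneg (x - z)) h1]

lemma aux_coord_integrable (ρ : Measure E) (z : E)
    (h : Integrable (fun x => ‖x - z‖ ^ 2) ρ) (i j : Fin d) :
    Integrable (fun x => (x i - z i) * (x j - z j)) ρ := by
  have hm : ∀ k : Fin d, AEStronglyMeasurable (fun x : E => x k - z k) ρ :=
    fun k => ((aux_proj_cont k).sub continuous_const).aestronglyMeasurable
  have hsq : ∀ k : Fin d, Integrable (fun x : E => (x k - z k) ^ 2) ρ := by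
    intro k
    refine h.mono' (((aux_proj_cont k).sub continuous_const).pow 2).aestronglyMeasurable ?_
    filter_upwards with x
    rw [Real.norm_eq_abs, abs_of_nonneg (sq_nonneg _)]
    have := aux_coord_sq_le (x - z) k
    simpa [PiLp.sub_apply] using this
  exact aux_integrable_mul_of_sq (hm i) (hm j) (hsq i) (hsq j)

lemma aux_sum_integral (u v z : E) (ρ : Measure E)
    (h : ∀ i j, Integrable (fun x => (x i - z i) * (x j - z j)) ρ) :
    ∫ x, ⟪u, x - z⟫ * ⟪v, x - z⟫ ∂ρ
      = ∑ i, ∑ j, u i * v j * ∫ x, (x i - z i) * (x j - z j) ∂ρ := by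
  simp_rw [aux_inner_expand u v z]
  rw [integral_finset_sum _ (fun i _ => integrable_finset_sum _
    (fun j _ => ((h i j).const_mul (u i * v j))))]
  refine Finset.sum_congr rfl fun i _ => ?_
  rw [integral_finset_sum _ (fun j _ => ((h i j).const_mul (u i * v j)))]
  exact Finset.sum_congr rfl fun j _ => integral_const_mul _ _

lemma aux_coupling_bound (μ ν : Measure E)
    [IsProbabilityMeasure μ] [IsProbabilityMeasure ν]
    (hμ2 : Integrable (fun x => ‖x‖ ^ 2) μ) (hν2 : Integrable (fun y => ‖y‖ ^ 2) ν)
    (z : E) (γ : Measure (E × E))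
    (hγ : IsProbabilityMeasure γ) (hfst : γ.map Prod.fst = μ) (hsnd : γ.map Prod.snd = ν) :
    opNorm (secondMomentAbout μ z - secondMomentAbout ν z)
      ≤ (Real.sqrt (∫ x, ‖x - z‖ ^ 2 ∂μ) + Real.sqrt (∫ y, ‖y - z‖ ^ 2 ∂ν))
        * Real.sqrt (∫ p, ‖p.1 - p.2‖ ^ 2 ∂γ) := by
  set A := Real.sqrt (∫ x, ‖x - z‖ ^ 2 ∂μ) with hA
  set B := Real.sqrt (∫ y, ‖y - z‖ ^ 2 ∂ν) with hB
  set sI := Real.sqrt (∫ p : E × E, ‖p.1 - p.2‖ ^ 2 ∂γ) with hsI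
  have hA0 : 0 ≤ A := Real.sqrt_nonneg _
  have hB0 : 0 ≤ B := Real.sqrt_nonneg _
  have hsI0 : 0 ≤ sI := Real.sqrt_nonneg _
  have hμz : Integrable (fun x => ‖x - z‖ ^ 2) μ := aux_int_shift μ z hμ2
  have hνz : Integrable (fun y => ‖y - z‖ ^ 2) ν := aux_int_shift ν z hν2
  have hcz : Continuous (fun x : E => ‖x - z‖ ^ 2) :=
    (continuous_id.sub continuous_const).norm.pow 2
  have h1γ : Integrable (fun p : E × E => ‖p.1 - z‖ ^ 2) γ :=
    aux_map_integrable measurable_fst hfst hcz.aestronglyMeasurable hμz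
  have h2γ : Integrable (fun p : E × E => ‖p.2 - z‖ ^ 2) γ :=
    aux_map_integrable measurable_snd hsnd hcz.aestronglyMeasurable hνz
  have hcost : Integrable (fun p : E × E => ‖p.1 - p.2‖ ^ 2) γ := by
    refine Integrable.mono' ((h1γ.const_mul 2).add (h2γ.const_mul 2))
      (((continuous_fst.sub continuous_snd).norm.pow 2).aestronglyMeasurable) ?_
    filter_upwards with p
    simp only [Pi.add_apply]
    have h1 : ‖p.1 - p.2‖ ≤ ‖p.1 - z‖ + ‖p.2 - z‖ := by
      have := norm_sub_le (p.1 - z) (p.2 - z)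
      simpa [sub_sub_sub_cancel_right] using this
    rw [Real.norm_eq_abs, abs_of_nonneg (by positivity)]
    nlinarith [sq_nonneg (‖p.1 - z‖ - ‖p.2 - z‖),
      mul_self_le_mul_self (norm_nonneg (p.1 - p.2)) h1]
  have hIμ : ∫ x, ‖x - z‖ ^ 2 ∂μ = ∫ p : E × E, ‖p.1 - z‖ ^ 2 ∂γ :=
    aux_map_integral_eq measurable_fst hfst hcz.aestronglyMeasurable
  have hIν : ∫ y, ‖y - z‖ ^ 2 ∂ν = ∫ p : E × E, ‖p.2 - z‖ ^ 2 ∂γ :=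
    aux_map_integral_eq measurable_snd hsnd hcz.aestronglyMeasurable
  -- inner-square integrability and sqrt bounds
  have hsq : ∀ (u : E) (F : E × E → E), Continuous F →
      Integrable (fun p => ‖F p‖ ^ 2) γ → Integrable (fun p => ⟪u, F p⟫ ^ 2) γ := by
    intro u F hF hFi
    refine Integrable.mono' (hFi.const_mul (‖u‖ ^ 2))
      (((continuous_const.inner hF).pow 2).aestronglyMeasurable) ?_
    filter_upwards with p
    rw [Real.norm_eq_abs, abs_of_nonneg (sq_nonneg _)]
    exact aux_inner_sq_le u (F p)
  have hsqrt : ∀ (u : E) (F : E × E → E) (hF : Continuous F)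
      (hFi : Integrable (fun p => ‖F p‖ ^ 2) γ),
      Real.sqrt (∫ p, ⟪u, F p⟫ ^ 2 ∂γ) ≤ ‖u‖ * Real.sqrt (∫ p, ‖F p‖ ^ 2 ∂γ) := by
    intro u F hF hFi
    have hle : ∫ p, ⟪u, F p⟫ ^ 2 ∂γ ≤ ∫ p, ‖u‖ ^ 2 * ‖F p‖ ^ 2 ∂γ :=
      integral_mono (hsq u F hF hFi) (hFi.const_mul _) (fun p => aux_inner_sq_le u (F p))
    calc Real.sqrt (∫ p, ⟪u, F p⟫ ^ 2 ∂γ) ≤ Real.sqrt (∫ p, ‖u‖ ^ 2 * ‖F p‖ ^ 2 ∂γ) :=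
          Real.sqrt_le_sqrt hle
      _ = ‖u‖ * Real.sqrt (∫ p, ‖F p‖ ^ 2 ∂γ) := by
          rw [integral_const_mul, Real.sqrt_mul (sq_nonneg _), Real.sqrt_sq (norm_nonneg u)]
  have hF1 : Continuous (fun p : E × E => p.1 - z) := continuous_fst.sub continuous_const
  have hF2 : Continuous (fun p : E × E => p.2 - z) := continuous_snd.sub continuous_const
  have hF3 : Continuous (fun p : E × E => p.1 - p.2) := continuous_fst.sub continuous_snd
  -- the bilinear bound
  have hbound : ∀ u v : E,
      |⟪u, (LinearMap.toContinuousLinearMap (Matrix.toEuclideanLin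
        (secondMomentAbout μ z - secondMomentAbout ν z))) v⟫|
        ≤ ‖u‖ * ‖v‖ * ((A + B) * sI) := by
    intro u v
    have hcont : ∀ w : E, Continuous (fun x : E => ⟪w, x - z⟫) :=
      fun w => continuous_const.inner (continuous_id.sub continuous_const)
    have hcμ := aux_coord_integrable μ z hμz
    have hcν := aux_coord_integrable ν z hνz
    have step1 : ⟪u, (LinearMap.toContinuousLinearMap (Matrix.toEuclideanLin
        (secondMomentAbout μ z - secondMomentAbout ν z))) v⟫
        = ∫ x, ⟪u, x - z⟫ * ⟪v, x - z⟫ ∂μ - ∫ y, ⟪u, y - z⟫ * ⟪v, y - z⟫ ∂ν := by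
      rw [aux_inner_mulVec, aux_sum_integral u v z μ hcμ, aux_sum_integral u v z ν hcν]
      simp only [Matrix.sub_apply, secondMomentAbout, mul_sub, Finset.sum_sub_distrib]
    have hcontm : ∀ w w' : E, Continuous (fun x : E => ⟪w, x - z⟫ * ⟪w', x - z⟫) :=
      fun w w' => (hcont w).mul (hcont w')
    have step2 : ⟪u, (LinearMap.toContinuousLinearMap (Matrix.toEuclideanLin
        (secondMomentAbout μ z - secondMomentAbout ν z))) v⟫
        = ∫ p : E × E, (⟪u, p.1 - z⟫ * ⟪v, p.1 - z⟫ - ⟪u, p.2 - z⟫ * ⟪v, p.2 - z⟫) ∂γ := by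
      rw [step1,
        aux_map_integral_eq measurable_fst hfst (hcontm u v).aestronglyMeasurable,
        aux_map_integral_eq measurable_snd hsnd (hcontm u v).aestronglyMeasurable,
        ← integral_sub]
      · exact aux_integrable_mul_of_sq
          ((continuous_const.inner hF1).aestronglyMeasurable)
          ((continuous_const.inner hF1).aestronglyMeasurable)
          (hsq u _ hF1 h1γ) (hsq v _ hF1 h1γ)
      · exact aux_integrable_mul_of_sq
          ((continuous_const.inner hF2).aestronglyMeasurable)
          ((continuous_const.inner hF2).aestronglyMeasurable)
          (hsq u _ hF2 h2γ) (hsq v _ hF2 h2γ)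
    have hptwise : ∀ p : E × E,
        ⟪u, p.1 - z⟫ * ⟪v, p.1 - z⟫ - ⟪u, p.2 - z⟫ * ⟪v, p.2 - z⟫
          = ⟪u, p.1 - z⟫ * ⟪v, p.1 - p.2⟫ + ⟪u, p.1 - p.2⟫ * ⟪v, p.2 - z⟫ := by
      intro p
      have h1 : ⟪v, p.1 - p.2⟫ = ⟪v, p.1 - z⟫ - ⟪v, p.2 - z⟫ := by
        rw [← inner_sub_right, sub_sub_sub_cancel_right]
      have h2 : ⟪u, p.1 - p.2⟫ = ⟪u, p.1 - z⟫ - ⟪u, p.2 - z⟫ := by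
        rw [← inner_sub_right, sub_sub_sub_cancel_right]
      rw [h1, h2]; ring
    have hint1 : Integrable (fun p : E × E => ⟪u, p.1 - z⟫ * ⟪v, p.1 - p.2⟫) γ :=
      aux_integrable_mul_of_sq ((continuous_const.inner hF1).aestronglyMeasurable)
        ((continuous_const.inner hF3).aestronglyMeasurable)
        (hsq u _ hF1 h1γ) (hsq v _ hF3 hcost)
    have hint2 : Integrable (fun p : E × E => ⟪u, p.1 - p.2⟫ * ⟪v, p.2 - z⟫) γ :=
      aux_integrable_mul_of_sq ((continuous_const.inner hF3).aestronglyMeasurable)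
        ((continuous_const.inner hF2).aestronglyMeasurable)
        (hsq u _ hF3 hcost) (hsq v _ hF2 h2γ)
    have step3 : ⟪u, (LinearMap.toContinuousLinearMap (Matrix.toEuclideanLin
        (secondMomentAbout μ z - secondMomentAbout ν z))) v⟫
        = (∫ p : E × E, ⟪u, p.1 - z⟫ * ⟪v, p.1 - p.2⟫ ∂γ)
          + ∫ p : E × E, ⟪u, p.1 - p.2⟫ * ⟪v, p.2 - z⟫ ∂γ := by
      rw [step2, ← integral_add hint1 hint2]
      exact integral_congr_ae (Filter.Eventually.of_forall fun p => hptwise p)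
    -- Cauchy–Schwarz on each term
    have cs1 := aux_abs_integral_mul_le ((continuous_const.inner hF1).aestronglyMeasurable)
      ((continuous_const.inner hF3).aestronglyMeasurable) (hsq u _ hF1 h1γ) (hsq v _ hF3 hcost)
    have cs2 := aux_abs_integral_mul_le ((continuous_const.inner hF3).aestronglyMeasurable)
      ((continuous_const.inner hF2).aestronglyMeasurable) (hsq u _ hF3 hcost) (hsq v _ hF2 h2γ)
    have b1 : Real.sqrt (∫ p : E × E, ⟪u, p.1 - z⟫ ^ 2 ∂γ) ≤ ‖u‖ * A := by
      rw [hA, hIμ]; exact hsqrt u _ hF1 h1γ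
    have b2 : Real.sqrt (∫ p : E × E, ⟪v, p.2 - z⟫ ^ 2 ∂γ) ≤ ‖v‖ * B := by
      rw [hB, hIν]; exact hsqrt v _ hF2 h2γ
    have b3 : Real.sqrt (∫ p : E × E, ⟪v, p.1 - p.2⟫ ^ 2 ∂γ) ≤ ‖v‖ * sI := by
      rw [hsI]; exact hsqrt v _ hF3 hcost
    have b4 : Real.sqrt (∫ p : E × E, ⟪u, p.1 - p.2⟫ ^ 2 ∂γ) ≤ ‖u‖ * sI := by
      rw [hsI]; exact hsqrt u _ hF3 hcost
    have hs0 : ∀ (f : E × E → ℝ), (0:ℝ) ≤ Real.sqrt (∫ p, f p ∂γ) := fun f => Real.sqrt_nonneg _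
    calc |⟪u, (LinearMap.toContinuousLinearMap (Matrix.toEuclideanLin
        (secondMomentAbout μ z - secondMomentAbout ν z))) v⟫|
        ≤ |∫ p : E × E, ⟪u, p.1 - z⟫ * ⟪v, p.1 - p.2⟫ ∂γ|
          + |∫ p : E × E, ⟪u, p.1 - p.2⟫ * ⟪v, p.2 - z⟫ ∂γ| := by
          rw [step3]; exact abs_add_le _ _
      _ ≤ (‖u‖ * A) * (‖v‖ * sI) + (‖u‖ * sI) * (‖v‖ * B) := by
          refine add_le_add (cs1.trans ?_) (cs2.trans ?_)
          · exact mul_le_mul b1 b3 (Real.sqrt_nonneg _) (by positivity)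
          · exact mul_le_mul b4 b2 (Real.sqrt_nonneg _) (by positivity)
      _ = ‖u‖ * ‖v‖ * ((A + B) * sI) := by ring
  -- conclude the operator-norm bound
  have hC0 : (0:ℝ) ≤ (A + B) * sI := by positivity
  rw [opNorm]
  set T := LinearMap.toContinuousLinearMap (Matrix.toEuclideanLin
    (secondMomentAbout μ z - secondMomentAbout ν z)) with hT
  refine ContinuousLinearMap.opNorm_le_bound _ hC0 fun v => ?_
  have h := hbound (T v) v
  rw [real_inner_self_eq_norm_sq, abs_of_nonneg (sq_nonneg _)] at h
  nlinarith [norm_nonneg (T v), mul_nonneg hC0 (norm_nonneg v), h]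

end euclid


theorem stmt_11 (d : ℕ) (μ ν : Measure (EuclideanSpace ℝ (Fin d)))
    [IsProbabilityMeasure μ] [IsProbabilityMeasure ν]
    (hμ2 : Integrable (fun x => ‖x‖ ^ 2) μ) (hν2 : Integrable (fun y => ‖y‖ ^ 2) ν)
    (z : EuclideanSpace ℝ (Fin d)) :
    opNorm (secondMomentAbout μ z - secondMomentAbout ν z)
      ≤ (Real.sqrt (∫ x, ‖x - z‖ ^ 2 ∂μ) + Real.sqrt (∫ y, ‖y - z‖ ^ 2 ∂ν)) * W2 μ ν := by
  set A := Real.sqrt (∫ x, ‖x - z‖ ^ 2 ∂μ) with hA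
  set B := Real.sqrt (∫ y, ‖y - z‖ ^ 2 ∂ν) with hB
  have hA0 : 0 ≤ A := Real.sqrt_nonneg _
  have hB0 : 0 ≤ B := Real.sqrt_nonneg _
  set S := {r : ℝ | ∃ γ : Measure (EuclideanSpace ℝ (Fin d) × EuclideanSpace ℝ (Fin d)),
    IsProbabilityMeasure γ ∧ γ.map Prod.fst = μ ∧ γ.map Prod.snd = ν ∧
    r = Real.sqrt (∫ p, ‖p.1 - p.2‖ ^ 2 ∂γ)} with hSdef
  have hW : W2 μ ν = sInf S := rfl
  have hne : S.Nonempty := by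
    refine ⟨Real.sqrt (∫ p, ‖p.1 - p.2‖ ^ 2 ∂(μ.prod ν)), μ.prod ν, inferInstance, ?_, ?_, rfl⟩
    · simp
    · simp
  have hkey : ∀ r ∈ S, opNorm (secondMomentAbout μ z - secondMomentAbout ν z) ≤ (A + B) * r := by
    rintro r ⟨γ, hγ, h1, h2, rfl⟩
    exact aux_coupling_bound μ ν hμ2 hν2 z γ hγ h1 h2
  rw [hW]
  rcases eq_or_lt_of_le (add_nonneg hA0 hB0) with h | h
  · obtain ⟨r, hr⟩ := hne
    have h1 := hkey r hr
    rw [← h, zero_mul] at h1 ⊢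
    exact h1
  · have hdiv : opNorm (secondMomentAbout μ z - secondMomentAbout ν z) / (A + B) ≤ sInf S := by
      refine le_csInf hne fun r hr => ?_
      rw [div_le_iff₀ h]
      calc opNorm (secondMomentAbout μ z - secondMomentAbout ν z) ≤ (A + B) * r := hkey r hr
        _ = r * (A + B) := by ring
    calc opNorm (secondMomentAbout μ z - secondMomentAbout ν z)
        = (A + B) * (opNorm (secondMomentAbout μ z - secondMomentAbout ν z) / (A + B)) := by
          field_simp
      _ ≤ (A + B) * sInf S := mul_le_mul_of_nonneg_left hdiv h.le
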